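/- In the heterogeneous basic game, suppose g(h) = h·χ(h) is concave on (0,∞), and suppose (g(h_{i*−1}) − g(h_{i*}))/(h_{i*−1} − h_{i*}) < V/d where {1,...,i*} is the participating set. Then the expected payoff U_i({1,...,i*}) is strictly decreasing in i on {1,...,i*}: for all i < j ≤ i*, U_i({1,...,i*}) > U_j({1,...,i*}). -/
import Mathlib


open Finset

/-- Expected payoff of scientist `i` in the heterogeneous basic game (opportunity cost
rate `χ(h_i)`) when the participating set is `I`. Scientists are indexed `0,…,N-1` in
descending order of scientific capital, so the paper's `{1,…,i*}` is `Finset.Iic kstar`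
for `kstar = i*-1`. -/
noncomputable def payoff {N : ℕ} (h : Fin N → ℝ) (χ : ℝ → ℝ) (V d F : ℝ)
    (I : Finset (Fin N)) (i : Fin N) : ℝ :=
  V * h i / (∑ j ∈ I, h j) - h i * χ (h i) * d / (∑ j ∈ I, h j) - F

/-- if `g(h) = h·χ(h)` is concave on `(0,∞)` and the slope of `g` between
`h_{i*−1}` and `h_{i*}` is less than `V/d`, then on the participating set `{1,…,i*}`
(with `i* ≥ 2`) the expected payoff is strictly decreasing in the scientist's index. -/
theorem payoff_strictly_decreasing (N : ℕ) (h : Fin N → ℝ) (χ : ℝ → ℝ)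
    (hpos : ∀ i, 0 < h i) (hdesc : ∀ i j : Fin N, i < j → h j < h i)
    (hχpos : ∀ t : ℝ, 0 < t → 0 < χ t)
    (hconc : ConcaveOn ℝ (Set.Ioi (0 : ℝ)) (fun t => t * χ t))
    (V d F : ℝ) (hV : 0 < V) (hd : 0 < d) (hF : 0 < F)
    (kstar kpred : Fin N) (hpred : (kpred : ℕ) + 1 = (kstar : ℕ))
    (hslope : (h kpred * χ (h kpred) - h kstar * χ (h kstar)) / (h kpred - h kstar) < V / d) :
    ∀ i j : Fin N, i < j → j ≤ kstar →
      payoff h χ V d F (Finset.Iic kstar) j < payoff h χ V d F (Finset.Iic kstar) i := by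
  intro i j hij hjk
  set g : ℝ → ℝ := fun t => t * χ t with hg
  have cg : ConvexOn ℝ (Set.Ioi (0 : ℝ)) (fun t => -g t) := hconc.neg
  -- basic orderings
  have hik : i ≤ kpred := by
    have : (i : ℕ) + 1 ≤ (j : ℕ) := hij
    have : (j : ℕ) ≤ (kstar : ℕ) := hjk
    omega
  have hpk : kpred < kstar := by
    have : (kpred : ℕ) < (kstar : ℕ) := by omega
    exact this
  have h_skp : h kstar < h kpred := hdesc _ _ hpk
  have h_ji : h j < h i := hdesc _ _ hij
  have h_kj : h kstar ≤ h j := by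
    rcases lt_or_eq_of_le hjk with hlt | rfl
    · exact (hdesc _ _ hlt).le
    · exact le_rfl
  have h_pi : h kpred ≤ h i := by
    rcases lt_or_eq_of_le hik with hlt | rfl
    · exact (hdesc _ _ hlt).le
    · exact le_rfl
  have mi : h i ∈ Set.Ioi (0 : ℝ) := hpos i
  have mj : h j ∈ Set.Ioi (0 : ℝ) := hpos j
  have mp : h kpred ∈ Set.Ioi (0 : ℝ) := hpos kpred
  have ms : h kstar ∈ Set.Ioi (0 : ℝ) := hpos kstar
  -- slope comparisons via convexity of -g
  have s1 : (g (h i) - g (h j)) / (h i - h j)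
      ≤ (g (h i) - g (h kstar)) / (h i - h kstar) := by
    have := cg.secant_mono mi ms mj (by intro e; linarith [h_kj, h_ji])
      (by intro e; linarith) h_kj
    have e1 : (-g (h kstar) - -g (h i)) / (h kstar - h i)
        = -((g (h i) - g (h kstar)) / (h i - h kstar)) := by
      rw [show h kstar - h i = -(h i - h kstar) by ring, div_neg,
        show -g (h kstar) - -g (h i) = g (h i) - g (h kstar) by ring]
    have e2 : (-g (h j) - -g (h i)) / (h j - h i)
        = -((g (h i) - g (h j)) / (h i - h j)) := by
      rw [show h j - h i = -(h i - h j) by ring, div_neg,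
        show -g (h j) - -g (h i) = g (h i) - g (h j) by ring]
    rw [e1, e2] at this
    linarith
  have s2 : (g (h i) - g (h kstar)) / (h i - h kstar)
      ≤ (g (h kpred) - g (h kstar)) / (h kpred - h kstar) := by
    have := cg.secant_mono ms mp mi (by intro e; linarith)
      (by intro e; linarith [h_pi, h_skp]) h_pi
    have e1 : (-g (h kpred) - -g (h kstar)) / (h kpred - h kstar)
        = -((g (h kpred) - g (h kstar)) / (h kpred - h kstar)) := by
      rw [show -g (h kpred) - -g (h kstar) = -(g (h kpred) - g (h kstar)) by ring, neg_div]
    have e2 : (-g (h i) - -g (h kstar)) / (h i - h kstar)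
        = -((g (h i) - g (h kstar)) / (h i - h kstar)) := by
      rw [show -g (h i) - -g (h kstar) = -(g (h i) - g (h kstar)) by ring, neg_div]
    rw [e1, e2] at this
    linarith
  have sfin : (g (h i) - g (h j)) / (h i - h j) < V / d := lt_of_le_of_lt (le_trans s1 s2) hslope
  have hdiff : 0 < h i - h j := by linarith
  rw [div_lt_div_iff₀ hdiff hd] at sfin
  -- positivity of the total capital
  have hS : 0 < ∑ k ∈ Finset.Iic kstar, h k := by
    apply Finset.sum_pos (fun k _ => hpos k)
    exact ⟨kstar, Finset.mem_Iic.mpr le_rfl⟩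
  -- conclude
  simp only [payoff]
  rw [div_sub_div_same, div_sub_div_same]
  have hnum : V * h j - h j * χ (h j) * d < V * h i - h i * χ (h i) * d := by
    simp only [hg] at sfin
    nlinarith [sfin]
  exact sub_lt_sub_right ((div_lt_div_iff_of_pos_right hS).mpr hnum) F
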